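/- arXiv:2602.15303 — 3 statements merged into one kernel-verified Lean document; each statement's English description precedes it below -/
import Mathlib

section
/- Jensen/overlap lower bound on mixture entropy: let p(x) = Σ_{c=1}^K π_c f_c(x) be a mixture density whose components are square-integrable, and set z_{c,d} = ∫_{ℝⁿ} f_c(x) f_d(x) dx (the pairwise overlap integrals). Assume x ↦ p(x) log p(x) is Lebesgue integrable. Then h(p) ≥ -Σ_{c=1}^K π_c log( Σ_{d=1}^K π_d z_{c,d} ). -/
open MeasureTheory

/-- **Jensen/overlap lower bound on mixture entropy.**
Let `p = ∑ c, w c * f c` be a mixture of square-integrable probability densities on `ℝⁿ`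
and let `z c d = ∫ f c * f d` be the pairwise overlap integrals. Then
`h(p) ≥ -∑ c, w c * log (∑ d, w d * z c d)`. -/
theorem mixture_entropy_jensen_overlap_lower_bound
    (n K : ℕ) (hK : 1 ≤ K)
    (w : Fin K → ℝ) (hw_pos : ∀ c, 0 < w c) (hw_sum : ∑ c, w c = 1)
    (f : Fin K → (Fin n → ℝ) → ℝ)
    (hf_meas : ∀ c, Measurable (f c))
    (hf_nonneg : ∀ c x, 0 ≤ f c x)
    (hf_mass : ∀ c, ∫ x, f c x = 1)
    (hf_sq : ∀ c, Integrable (fun x => f c x ^ 2))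
    (p : (Fin n → ℝ) → ℝ) (hp : ∀ x, p x = ∑ c, w c * f c x)
    (z : Fin K → Fin K → ℝ) (hz : ∀ c d, z c d = ∫ x, f c x * f d x)
    (h_int : Integrable (fun x => p x * Real.log (p x))) :
    (-∑ c, w c * Real.log (∑ d, w d * z c d)) ≤ -∫ x, p x * Real.log (p x) := by
  classical
  have hw0 : ∀ c, (0:ℝ) ≤ w c := fun c => (hw_pos c).le
  have hp_meas : Measurable p := by
    have hpe : p = fun x => ∑ c, w c * f c x := funext hp
    rw [hpe]
    exact Finset.measurable_sum _ (fun c _ => (hf_meas c).const_mul _)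
  have hp_nonneg : ∀ x, 0 ≤ p x := by
    intro x; rw [hp]
    exact Finset.sum_nonneg fun c _ => mul_nonneg (hw0 c) (hf_nonneg c x)
  have hp_ge : ∀ c x, w c * f c x ≤ p x := by
    intro c x; rw [hp]
    exact Finset.single_le_sum (fun d _ => mul_nonneg (hw0 d) (hf_nonneg d x))
      (Finset.mem_univ c)
  have hfc_int : ∀ c, Integrable (f c) := by
    intro c
    by_contra h
    have h0 := integral_undef h
    rw [hf_mass c] at h0
    exact one_ne_zero h0
  have hff_int : ∀ c d, Integrable (fun x => f c x * f d x) := by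
    intro c d
    have hm : AEStronglyMeasurable (fun x => f c x * f d x) volume :=
      ((hf_meas c).mul (hf_meas d)).aestronglyMeasurable
    refine Integrable.mono' (((hf_sq c).add (hf_sq d)).div_const 2) hm ?_
    filter_upwards with x
    simp only [Pi.add_apply]
    rw [Real.norm_eq_abs, abs_of_nonneg (mul_nonneg (hf_nonneg c x) (hf_nonneg d x))]
    nlinarith [sq_nonneg (f c x - f d x)]
  have hz_nonneg : ∀ c d, 0 ≤ z c d := by
    intro c d; rw [hz]
    exact integral_nonneg fun x => mul_nonneg (hf_nonneg c x) (hf_nonneg d x)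
  have hzcc : ∀ c, 0 < z c c := by
    intro c
    rcases (hz_nonneg c c).lt_or_eq with h | h
    · exact h
    · exfalso
      rw [hz] at h
      have hzero : (fun x => f c x * f c x) =ᵐ[volume] 0 := by
        rw [← integral_eq_zero_iff_of_nonneg
          (fun x => mul_nonneg (hf_nonneg c x) (hf_nonneg c x)) (hff_int c c)]
        exact h.symm
      have hfzero : f c =ᵐ[volume] 0 := by
        filter_upwards [hzero] with x hx
        have : f c x * f c x = 0 := hx
        exact mul_self_eq_zero.mp this
      have : ∫ x, f c x = 0 := by
        rw [integral_congr_ae hfzero]; simp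
      rw [hf_mass c] at this
      exact one_ne_zero this
  set a : Fin K → ℝ := fun c => ∑ d, w d * z c d with ha
  have ha_pos : ∀ c, 0 < a c := by
    intro c
    refine Finset.sum_pos' (fun d _ => mul_nonneg (hw0 d) (hz_nonneg c d)) ?_
    exact ⟨c, Finset.mem_univ c, mul_pos (hw_pos c) (hzcc c)⟩
  have hfp_eq : ∀ c, (fun x => f c x * p x) = fun x => ∑ d, w d * (f c x * f d x) := by
    intro c; funext x
    rw [hp, Finset.mul_sum]
    exact Finset.sum_congr rfl fun d _ => by ring
  have hfp_int : ∀ c, Integrable (fun x => f c x * p x) := by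
    intro c
    rw [hfp_eq c]
    exact integrable_finset_sum _ fun d _ => (hff_int c d).const_mul _
  have hfp_val : ∀ c, ∫ x, f c x * p x = a c := by
    intro c
    rw [hfp_eq c, integral_finset_sum _ (fun d _ => (hff_int c d).const_mul _)]
    refine Finset.sum_congr rfl fun d _ => ?_
    rw [integral_const_mul, hz]
  have hflog : ∀ c, Integrable (fun x => f c x * Real.log (p x)) := by
    intro c
    have hm : AEStronglyMeasurable (fun x => f c x * Real.log (p x)) volume :=
      ((hf_meas c).mul (Real.measurable_log.comp hp_meas)).aestronglyMeasurable
    refine Integrable.mono' ((h_int.norm).const_mul (w c)⁻¹) hm ?_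
    filter_upwards with x
    rw [Real.norm_eq_abs, abs_mul, abs_of_nonneg (hf_nonneg c x),
      Real.norm_eq_abs, abs_mul, abs_of_nonneg (hp_nonneg x)]
    have hA : 0 ≤ |Real.log (p x)| := abs_nonneg _
    have h1 := mul_le_mul_of_nonneg_right (hp_ge c x) hA
    have hwc := hw_pos c
    calc f c x * |Real.log (p x)|
        = (w c)⁻¹ * (w c * f c x * |Real.log (p x)|) := by
          field_simp
      _ ≤ (w c)⁻¹ * (p x * |Real.log (p x)|) :=
          mul_le_mul_of_nonneg_left h1 (inv_nonneg.mpr hwc.le)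
  have key : ∀ c, ∫ x, f c x * Real.log (p x) ≤ Real.log (a c) := by
    intro c
    have hac := ha_pos c
    have i1 : Integrable (fun x => f c x * Real.log (a c)) := (hfc_int c).mul_const _
    have i2 : Integrable (fun x => f c x * p x / a c) := (hfp_int c).div_const _
    have i12 : Integrable (fun x => f c x * Real.log (a c) + f c x * p x / a c) := i1.add i2
    have hrhs_int : Integrable
        (fun x => f c x * Real.log (a c) + f c x * p x / a c - f c x) :=
      i12.sub (hfc_int c)
    have hpt : ∀ x, f c x * Real.log (p x)
        ≤ f c x * Real.log (a c) + f c x * p x / a c - f c x := by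
      intro x
      rcases (hf_nonneg c x).lt_or_eq with h0 | h0
      · have hpx : 0 < p x := lt_of_lt_of_le (mul_pos (hw_pos c) h0) (hp_ge c x)
        have hlog := Real.log_le_sub_one_of_pos (div_pos hpx hac)
        rw [Real.log_div hpx.ne' hac.ne'] at hlog
        have h2 := mul_le_mul_of_nonneg_left hlog h0.le
        have : f c x * p x / a c = f c x * (p x / a c) := by ring
        nlinarith
      · rw [← h0]; simp
    have hmono := integral_mono (hflog c) hrhs_int hpt
    have hrhs_val : ∫ x, (f c x * Real.log (a c) + f c x * p x / a c - f c x)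
        = Real.log (a c) := by
      rw [integral_sub i12 (hfc_int c), integral_add i1 i2,
        integral_mul_const, integral_div, hf_mass c, hfp_val c]
      field_simp
      ring
    rw [hrhs_val] at hmono
    exact hmono
  have hsum : ∫ x, p x * Real.log (p x) ≤ ∑ c, w c * Real.log (a c) := by
    have hpe : (fun x => p x * Real.log (p x))
        = fun x => ∑ c, w c * (f c x * Real.log (p x)) := by
      funext x
      rw [hp, Finset.sum_mul]
      exact Finset.sum_congr rfl fun c _ => by ring
    rw [hpe, integral_finset_sum _ (fun c _ => (hflog c).const_mul _)]
    refine Finset.sum_le_sum fun c _ => ?_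
    rw [integral_const_mul]
    exact mul_le_mul_of_nonneg_left (key c) (hw0 c)
  have : (∑ c, w c * Real.log (a c)) = ∑ c, w c * Real.log (∑ d, w d * z c d) := rfl
  linarith [hsum]
end

section
/- Laplace–Laplace overlap integral with unequal scales: let μ₁, μ₂ ∈ ℝ and s₁, s₂ > 0 with s₁ ≠ s₂, set δ = |μ₁ - μ₂|, and let f_i(x) = (1/(2s_i)) exp( -|x-μ_i|/s_i ) for i = 1, 2. Then ∫_ℝ f₁(x) f₂(x) dx = ( s₁ e^{-δ/s₁} - s₂ e^{-δ/s₂} ) / ( 2 (s₁² - s₂²) ). -/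
open MeasureTheory Set Real intervalIntegral

/-- integral of `exp (-(c*x))` over `Ioi a`. -/
lemma aux_int_exp_neg_Ioi (c a : ℝ) (hc : 0 < c) :
    ∫ x in Ioi a, Real.exp (-(c * x)) = Real.exp (-(c * a)) / c := by
  have := integral_comp_mul_left_Ioi (fun y => Real.exp (-y)) a hc
  simpa [smul_eq_mul, integral_exp_neg_Ioi, integral_exp_Iic, div_eq_inv_mul] using this

lemma aux_integrableOn_exp_neg_Ioi (c a : ℝ) (hc : 0 < c) :
    IntegrableOn (fun x => Real.exp (-(c * x))) (Ioi a) := by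
  simpa [neg_mul] using exp_neg_integrableOn_Ioi a hc

lemma aux_int_exp_Iic (c d : ℝ) (hc : 0 < c) :
    ∫ x in Iic d, Real.exp (c * x) = Real.exp (c * d) / c := by
  have h := integral_comp_neg_Iic d (fun y => Real.exp (-(c * y)))
  have h2 : ∀ x : ℝ, Real.exp (-(c * -x)) = Real.exp (c * x) := by intro x; ring_nf
  simp only [h2] at h
  rw [h, aux_int_exp_neg_Ioi c (-d) hc]
  ring_nf

lemma aux_integrableOn_exp_Iic (c d : ℝ) (hc : 0 < c) :
    IntegrableOn (fun x => Real.exp (c * x)) (Iic d) := by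
  have A : MeasurableEmbedding fun x : ℝ => -x :=
    (Homeomorph.neg ℝ).isClosedEmbedding.measurableEmbedding
  have h : IntegrableOn (fun x : ℝ => Real.exp (c * -x)) (Ioi (-d)) := by
    have := aux_integrableOn_exp_neg_Ioi c (-d) hc
    apply this.congr_fun _ measurableSet_Ioi
    intro x _; ring_nf
  have hIio : IntegrableOn (fun x => Real.exp (c * x)) (Iio d) := by
    rw [← Measure.map_neg_eq_self (volume : Measure ℝ), A.integrableOn_map_iff]
    have hpre : (fun x : ℝ => -x) ⁻¹' Iio d = Ioi (-d) := by
      ext x; simp [lt_neg]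
    rw [hpre]
    exact h.congr_fun (fun x _ => by simp [Function.comp, mul_neg]) measurableSet_Ioi
  have hsing : IntegrableOn (fun x => Real.exp (c * x)) ({d} : Set ℝ) := by
    rw [IntegrableOn, Measure.restrict_eq_zero.2 (by simp)]
    exact integrable_zero_measure
  have heq : Iic d = Iio d ∪ {d} := by
    ext x; simp [le_iff_lt_or_eq]
  rw [heq]
  exact hIio.union hsing

/-- Core computation for `d ≥ 0`. -/
lemma aux_core (d s₁ s₂ : ℝ) (hd : 0 ≤ d) (hs₁ : 0 < s₁) (hs₂ : 0 < s₂) (hne : s₁ ≠ s₂) :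
    ∫ x, Real.exp (-|x - d| / s₁) * Real.exp (-|x| / s₂) =
      2 * s₁ * s₂ * (s₁ * Real.exp (-d / s₁) - s₂ * Real.exp (-d / s₂)) / (s₁ ^ 2 - s₂ ^ 2) := by
  set c₁ : ℝ := 1 / s₁ + 1 / s₂ with hc₁
  set c₂ : ℝ := 1 / s₁ - 1 / s₂ with hc₂
  have hc₁pos : 0 < c₁ := by positivity
  have hc₂ne : c₂ ≠ 0 := by
    simp only [hc₂, sub_ne_zero]
    intro h
    apply hne
    field_simp at h
    linarith
  set g : ℝ → ℝ := fun x => Real.exp (-|x - d| / s₁) * Real.exp (-|x| / s₂) with hg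
  have hIic : ∀ x ∈ Iic (0:ℝ), g x = Real.exp (-d / s₁) * Real.exp (c₁ * x) := by
    intro x hx
    simp only [mem_Iic] at hx
    simp only [hg]
    rw [abs_of_nonpos (by linarith : x - d ≤ 0), abs_of_nonpos hx, ← Real.exp_add,
      ← Real.exp_add]
    congr 1
    rw [hc₁]
    field_simp
    ring
  have hIoc : ∀ x ∈ Ioc (0:ℝ) d, g x = Real.exp (-d / s₁) * Real.exp (c₂ * x) := by
    intro x hx
    simp only [mem_Ioc] at hx
    simp only [hg]
    rw [abs_of_nonpos (by linarith [hx.2] : x - d ≤ 0), abs_of_pos hx.1, ← Real.exp_add,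
      ← Real.exp_add]
    congr 1
    rw [hc₂]
    field_simp
    ring
  have hIoi : ∀ x ∈ Ioi d, g x = Real.exp (d / s₁) * Real.exp (-(c₁ * x)) := by
    intro x hx
    simp only [mem_Ioi] at hx
    simp only [hg]
    rw [abs_of_pos (by linarith : (0:ℝ) < x - d), abs_of_pos (lt_of_le_of_lt hd hx),
      ← Real.exp_add, ← Real.exp_add]
    congr 1
    rw [hc₁]
    field_simp
    ring
  have intIic : IntegrableOn g (Iic 0) := by
    have h0 : IntegrableOn (fun x => Real.exp (-d / s₁) * Real.exp (c₁ * x)) (Iic 0) :=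
      (aux_integrableOn_exp_Iic c₁ 0 hc₁pos).const_mul _
    exact h0.congr_fun (fun x hx => (hIic x hx).symm) measurableSet_Iic
  have hgcont : Continuous g := by
    apply Continuous.mul <;> exact Real.continuous_exp.comp (by fun_prop)
  have intIoc : IntegrableOn g (Ioc 0 d) := hgcont.integrableOn_Ioc
  have intIoi : IntegrableOn g (Ioi d) := by
    have h0 : IntegrableOn (fun x => Real.exp (d / s₁) * Real.exp (-(c₁ * x))) (Ioi d) :=
      (aux_integrableOn_exp_neg_Ioi c₁ d hc₁pos).const_mul _
    exact h0.congr_fun (fun x hx => (hIoi x hx).symm) measurableSet_Ioi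
  have intIoi0 : IntegrableOn g (Ioi 0) := by
    rw [← Ioc_union_Ioi_eq_Ioi hd]
    exact intIoc.union intIoi
  have hsplit : (∫ x, g x) = (∫ x in Iic 0, g x) + ((∫ x in Ioc 0 d, g x) + ∫ x in Ioi d, g x) := by
    rw [← integral_Iic_add_Ioi intIic intIoi0]
    congr 1
    rw [← Ioc_union_Ioi_eq_Ioi hd,
      setIntegral_union (Ioc_disjoint_Ioi le_rfl) measurableSet_Ioi intIoc intIoi]
  have hA : (∫ x in Iic 0, g x) = Real.exp (-d / s₁) / c₁ := by
    rw [setIntegral_congr_fun measurableSet_Iic hIic, MeasureTheory.integral_const_mul,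
      aux_int_exp_Iic c₁ 0 hc₁pos, mul_zero, Real.exp_zero, mul_one_div]
  have hB : (∫ x in Ioc 0 d, g x) =
      (Real.exp (-d / s₂) - Real.exp (-d / s₁)) / c₂ := by
    rw [setIntegral_congr_fun measurableSet_Ioc hIoc, MeasureTheory.integral_const_mul,
      ← integral_of_le hd, integral_comp_mul_left _ hc₂ne, integral_exp]
    have key : Real.exp (-d / s₁) * Real.exp (c₂ * d) = Real.exp (-d / s₂) := by
      rw [← Real.exp_add]
      congr 1
      rw [hc₂]
      field_simp
      ring
    rw [← key]
    simp only [mul_zero, Real.exp_zero, smul_eq_mul]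
    ring
  have hC : (∫ x in Ioi d, g x) = Real.exp (-d / s₂) / c₁ := by
    rw [setIntegral_congr_fun measurableSet_Ioi hIoi, MeasureTheory.integral_const_mul,
      aux_int_exp_neg_Ioi c₁ d hc₁pos, ← mul_div_assoc, ← Real.exp_add]
    congr 2
    rw [hc₁]
    field_simp
    ring
  rw [hsplit, hA, hB, hC, hc₁, hc₂]
  have h1 : s₁ + s₂ ≠ 0 := by positivity
  have h2 : s₁ - s₂ ≠ 0 := sub_ne_zero.2 hne
  have h3 : s₁ ^ 2 - s₂ ^ 2 ≠ 0 := by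
    intro h
    apply h2
    rcases mul_eq_zero.1 (show (s₁ - s₂) * (s₁ + s₂) = 0 by ring_nf; linarith [h]) with h | h
    · exact h
    · exact absurd h h1
  have h4 : s₂ - s₁ ≠ 0 := fun h => h2 (by linarith [sub_eq_zero.1 h])
  have h5 : -s₁ + s₂ ≠ 0 := by rw [neg_add_eq_sub]; exact h4
  have h6 : s₂ + s₁ ≠ 0 := by positivity
  field_simp
  ring

/-- **Laplace–Laplace overlap integral with unequal scales.**
For Laplace densities with locations `μ₁, μ₂` and distinct scales `s₁ ≠ s₂`, with
`δ = |μ₁ - μ₂|`, one has `∫ f₁ f₂ = (s₁ e^{-δ/s₁} - s₂ e^{-δ/s₂}) / (2 (s₁² - s₂²))`. -/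
theorem laplace_laplace_overlap_unequal_scales
    (μ₁ μ₂ s₁ s₂ : ℝ) (hs₁ : 0 < s₁) (hs₂ : 0 < s₂) (hne : s₁ ≠ s₂)
    (δ : ℝ) (hδ : δ = |μ₁ - μ₂|)
    (f₁ f₂ : ℝ → ℝ)
    (hf₁ : ∀ x, f₁ x = (1 / (2 * s₁)) * Real.exp (-|x - μ₁| / s₁))
    (hf₂ : ∀ x, f₂ x = (1 / (2 * s₂)) * Real.exp (-|x - μ₂| / s₂)) :
    (∫ x, f₁ x * f₂ x) =
      (s₁ * Real.exp (-δ / s₁) - s₂ * Real.exp (-δ / s₂)) / (2 * (s₁ ^ 2 - s₂ ^ 2)) := by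
  set d : ℝ := μ₁ - μ₂ with hd
  set G : ℝ → ℝ := fun x => Real.exp (-|x - d| / s₁) * Real.exp (-|x| / s₂) with hG
  have step1 : (∫ x, f₁ x * f₂ x) =
      (1 / (2 * s₁)) * (1 / (2 * s₂)) * ∫ x, G x := by
    have htrans := integral_sub_right_eq_self
      (fun x => (1 / (2 * s₁)) * (1 / (2 * s₂)) * G x) (μ := volume) μ₂
    rw [← MeasureTheory.integral_const_mul, ← htrans]
    congr 1
    ext x
    rw [hf₁, hf₂]
    simp only [hG]
    have e1 : x - μ₂ - d = x - μ₁ := by rw [hd]; ring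
    rw [e1]
    ring
  have hcore : (∫ x, G x) =
      2 * s₁ * s₂ * (s₁ * Real.exp (-δ / s₁) - s₂ * Real.exp (-δ / s₂)) / (s₁ ^ 2 - s₂ ^ 2) := by
    rcases le_or_gt 0 d with hdpos | hdneg
    · have hδd : δ = d := by rw [hδ, abs_of_nonneg hdpos]
      rw [hδd, hG]
      exact aux_core d s₁ s₂ hdpos hs₁ hs₂ hne
    · have hδd : δ = -d := by rw [hδ, abs_of_neg hdneg]
      have hflip : (∫ x, G x) = ∫ x, Real.exp (-|x - -d| / s₁) * Real.exp (-|x| / s₂) := by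
        rw [← integral_neg_eq_self (fun x => Real.exp (-|x - -d| / s₁) * Real.exp (-|x| / s₂))
          volume]
        congr 1
        ext x
        simp only [hG]
        congr 2
        · rw [show -x - -d = -(x - d) by ring, abs_neg]
        · rw [abs_neg]
      rw [hδd, hflip]
      exact aux_core (-d) s₁ s₂ (by linarith) hs₁ hs₂ hne
  rw [step1, hcore]
  have h3 : s₁ ^ 2 - s₂ ^ 2 ≠ 0 := by
    intro h
    have h2 : s₁ - s₂ ≠ 0 := sub_ne_zero.2 hne
    apply h2
    rcases mul_eq_zero.1 (show (s₁ - s₂) * (s₁ + s₂) = 0 by ring_nf; linarith [h]) with h | h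
    · exact h
    · exact absurd h (by positivity)
  field_simp
end

section
/- Gaussian–Laplace overlap integral in one dimension: let μ_g, μ_ℓ ∈ ℝ, σ > 0, b > 0, and set δ = μ_g - μ_ℓ. Let g(x) = (1/(σ√(2π))) exp( -(x-μ_g)²/(2σ²) ) be the Gaussian density and f(x) = (1/(2b)) exp( -|x-μ_ℓ|/b ) the Laplace density, and let Φ(t) = ∫_{-∞}^{t} (1/√(2π)) e^{-u²/2} du denote the standard normal cumulative distribution function. Then ∫_ℝ g(x) f(x) dx = ( e^{σ²/(2b²)} / (2b) ) [ e^{δ/b} Φ( (-δ - σ²/b)/σ ) + e^{-δ/b} Φ( (δ - σ²/b)/σ ) ]. -/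
open MeasureTheory Real

/-- The standard normal cumulative distribution function. -/
noncomputable def stdNormalCDF (t : ℝ) : ℝ :=
  ∫ u in Set.Iic t, (1 / Real.sqrt (2 * π)) * Real.exp (-u ^ 2 / 2)

open Set
lemma gaussA (m σ : ℝ) (hσ : 0 < σ) (c : ℝ) :
    (∫ x in Set.Iic c, (1 / (σ * Real.sqrt (2 * π))) * Real.exp (-(x - m) ^ 2 / (2 * σ ^ 2)))
      = stdNormalCDF ((c - m) / σ) := by
  have hσ' : σ ≠ 0 := hσ.ne'
  have himg : (fun u : ℝ => σ * u + m) '' Set.Iic ((c - m) / σ) = Set.Iic c := by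
    ext x
    simp only [mem_image, mem_Iic]
    constructor
    · rintro ⟨u, hu, rfl⟩
      rw [le_div_iff₀ hσ, mul_comm] at hu; linarith
    · intro hx
      exact ⟨(x - m) / σ, by gcongr, by field_simp; ring⟩
  rw [← himg, integral_image_eq_integral_abs_deriv_smul measurableSet_Iic
      (f' := fun _ => σ)
      (fun u _ => by simpa using ((hasDerivAt_id u).const_mul σ |>.add_const m).hasDerivWithinAt)
      (fun u _ v _ h => by simpa [hσ'] using h)]
  rw [stdNormalCDF]
  apply setIntegral_congr_fun measurableSet_Iic
  intro u _
  have : -(σ * u + m - m) ^ 2 / (2 * σ ^ 2) = -u ^ 2 / 2 := by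
    field_simp; ring
  simp only [smul_eq_mul]
  rw [this, abs_of_pos hσ]
  field_simp

lemma gaussB (m σ : ℝ) (hσ : 0 < σ) (c : ℝ) :
    (∫ x in Set.Ioi c, (1 / (σ * Real.sqrt (2 * π))) * Real.exp (-(x - m) ^ 2 / (2 * σ ^ 2)))
      = stdNormalCDF ((m - c) / σ) := by
  have hσ' : σ ≠ 0 := hσ.ne'
  rw [← integral_Ici_eq_integral_Ioi]
  have himg : (fun u : ℝ => -σ * u + m) '' Set.Iic ((m - c) / σ) = Set.Ici c := by
    ext x
    simp only [mem_image, mem_Iic, mem_Ici]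
    constructor
    · rintro ⟨u, hu, rfl⟩
      rw [le_div_iff₀ hσ, mul_comm] at hu; linarith
    · intro hx
      exact ⟨(m - x) / σ, by gcongr, by field_simp; ring⟩
  rw [← himg, integral_image_eq_integral_abs_deriv_smul measurableSet_Iic
      (f' := fun _ => -σ)
      (fun u _ => by simpa using ((hasDerivAt_id u).const_mul (-σ) |>.add_const m).hasDerivWithinAt)
      (fun u _ v _ h => by simpa [hσ'] using h)]
  rw [stdNormalCDF]
  apply setIntegral_congr_fun measurableSet_Iic
  intro u _
  have : -(-σ * u + m - m) ^ 2 / (2 * σ ^ 2) = -u ^ 2 / 2 := by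
    field_simp; ring
  simp only [smul_eq_mul]
  rw [this, abs_of_neg (by linarith : -σ < 0)]
  field_simp

/-- **Gaussian–Laplace overlap integral in one dimension.**
For a Gaussian density `g` with mean `μg` and standard deviation `σ > 0` and a Laplace
density `f` with location `μℓ` and scale `b > 0`, with `δ = μg - μℓ`,
`∫ g f = (e^{σ²/(2b²)}/(2b)) [ e^{δ/b} Φ((-δ - σ²/b)/σ) + e^{-δ/b} Φ((δ - σ²/b)/σ) ]`,
where `Φ` is the standard normal CDF. -/
theorem gaussian_laplace_overlap_integral
    (μg μℓ σ b : ℝ) (hσ : 0 < σ) (hb : 0 < b) (δ : ℝ) (hδ : δ = μg - μℓ)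
    (g f : ℝ → ℝ)
    (hg : ∀ x, g x = (1 / (σ * Real.sqrt (2 * π))) * Real.exp (-(x - μg) ^ 2 / (2 * σ ^ 2)))
    (hf : ∀ x, f x = (1 / (2 * b)) * Real.exp (-|x - μℓ| / b)) :
    (∫ x, g x * f x) =
      (Real.exp (σ ^ 2 / (2 * b ^ 2)) / (2 * b)) *
        (Real.exp (δ / b) * stdNormalCDF ((-δ - σ ^ 2 / b) / σ) +
         Real.exp (-δ / b) * stdNormalCDF ((δ - σ ^ 2 / b) / σ)) := by
  have hσ' : σ ≠ 0 := hσ.ne'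
  have hb' : b ≠ 0 := hb.ne'
  -- integrability of g
  have hgi : Integrable g := by
    have h1 : Integrable (fun x : ℝ => Real.exp (-(1 / (2 * σ ^ 2)) * x ^ 2)) :=
      integrable_exp_neg_mul_sq (by positivity)
    have h2 : Integrable (fun x : ℝ =>
        (1 / (σ * Real.sqrt (2 * π))) * Real.exp (-(1 / (2 * σ ^ 2)) * (x - μg) ^ 2)) volume :=
      (h1.comp_sub_right μg).const_mul _
    refine h2.congr (Filter.Eventually.of_forall fun x => ?_)
    simp only
    rw [hg x]; congr 2; field_simp
  have hfc : Continuous f := by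
    have : f = fun x => (1 / (2 * b)) * Real.exp (-|x - μℓ| / b) := funext hf
    rw [this]; fun_prop
  have hint : Integrable (fun x => g x * f x) := by
    have h3 := hgi.bdd_mul hfc.aestronglyMeasurable
      (c := 1 / (2 * b)) (Filter.Eventually.of_forall fun x => by
        rw [hf x, Real.norm_eq_abs, abs_of_nonneg (by positivity)]
        have : Real.exp (-|x - μℓ| / b) ≤ 1 := by
          rw [Real.exp_le_one_iff]
          apply div_nonpos_of_nonpos_of_nonneg (by simp [abs_nonneg]) hb.le
        nlinarith [this, (by positivity : (0:ℝ) < 1 / (2 * b))])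
    exact h3.congr (Filter.Eventually.of_forall fun x => mul_comm _ _)
  rw [← intervalIntegral.integral_Iic_add_Ioi (b := μℓ) hint.integrableOn hint.integrableOn]
  have e1 : (∫ x in Set.Iic μℓ, g x * f x)
      = (1 / (2 * b)) * Real.exp (σ ^ 2 / (2 * b ^ 2) + δ / b)
          * stdNormalCDF ((-δ - σ ^ 2 / b) / σ) := by
    have key : ∀ x ∈ Set.Iic μℓ, g x * f x
        = ((1 / (2 * b)) * Real.exp (σ ^ 2 / (2 * b ^ 2) + δ / b))
            * ((1 / (σ * Real.sqrt (2 * π)))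
              * Real.exp (-(x - (μg + σ ^ 2 / b)) ^ 2 / (2 * σ ^ 2))) := by
      intro x hx
      rw [hg, hf, abs_of_nonpos (by simpa using hx : x - μℓ ≤ 0)]
      have hE : Real.exp (-(x - μg) ^ 2 / (2 * σ ^ 2)) * Real.exp (-(-(x - μℓ)) / b)
          = Real.exp (σ ^ 2 / (2 * b ^ 2) + δ / b)
              * Real.exp (-(x - (μg + σ ^ 2 / b)) ^ 2 / (2 * σ ^ 2)) := by
        rw [← Real.exp_add, ← Real.exp_add]; congr 1; subst hδ; field_simp; ring
      linear_combination (1 / (σ * Real.sqrt (2 * π))) * (1 / (2 * b)) * hE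
    rw [setIntegral_congr_fun measurableSet_Iic key, MeasureTheory.integral_const_mul,
      gaussA (μg + σ ^ 2 / b) σ hσ μℓ,
      show (μℓ - (μg + σ ^ 2 / b)) / σ = (-δ - σ ^ 2 / b) / σ from by rw [hδ]; ring]
  have e2 : (∫ x in Set.Ioi μℓ, g x * f x)
      = (1 / (2 * b)) * Real.exp (σ ^ 2 / (2 * b ^ 2) + -δ / b)
          * stdNormalCDF ((δ - σ ^ 2 / b) / σ) := by
    have key : ∀ x ∈ Set.Ioi μℓ, g x * f x
        = ((1 / (2 * b)) * Real.exp (σ ^ 2 / (2 * b ^ 2) + -δ / b))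
            * ((1 / (σ * Real.sqrt (2 * π)))
              * Real.exp (-(x - (μg - σ ^ 2 / b)) ^ 2 / (2 * σ ^ 2))) := by
      intro x hx
      rw [hg, hf, abs_of_nonneg (by simp only [Set.mem_Ioi] at hx; linarith : (0:ℝ) ≤ x - μℓ)]
      have hE : Real.exp (-(x - μg) ^ 2 / (2 * σ ^ 2)) * Real.exp (-(x - μℓ) / b)
          = Real.exp (σ ^ 2 / (2 * b ^ 2) + -δ / b)
              * Real.exp (-(x - (μg - σ ^ 2 / b)) ^ 2 / (2 * σ ^ 2)) := by
        rw [← Real.exp_add, ← Real.exp_add]; congr 1; subst hδ; field_simp; ring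
      linear_combination (1 / (σ * Real.sqrt (2 * π))) * (1 / (2 * b)) * hE
    rw [setIntegral_congr_fun measurableSet_Ioi key, MeasureTheory.integral_const_mul,
      gaussB (μg - σ ^ 2 / b) σ hσ μℓ,
      show (μg - σ ^ 2 / b - μℓ) / σ = (δ - σ ^ 2 / b) / σ from by rw [hδ]; ring]
  rw [e1, e2, Real.exp_add, Real.exp_add]
  ring
end
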